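/- arXiv:2208.14850 — 2 statements merged into one kernel-verified Lean document; each statement's English description precedes it below -/
import Mathlib

section
/- If (a_1, …, a_m) and (b_1, …, b_n) are complementary sequences of integers all ≥ 2, then the reversed sequences (a_m, …, a_1) and (b_n, …, b_1) are also complementary. -/
/-- Negative continued fraction `[a₁, …, aₙ]⁻`. -/
def ncf : List ℚ → ℚ
  | [] => 0
  | [a] => a
  | a :: b :: l => a - 1 / ncf (b :: l)

/-- Negative continued fraction of a list of integers. -/
def ncfZ (l : List ℤ) : ℚ := ncf (l.map (fun x => (x : ℚ)))

/-- Two sequences of integers, all ≥ 2, are complementary if the reciprocals of their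
negative continued fractions sum to 1. -/
def Complementary (a b : List ℤ) : Prop :=
  a ≠ [] ∧ b ≠ [] ∧ (∀ x ∈ a, 2 ≤ x) ∧ (∀ x ∈ b, 2 ≤ x) ∧
    1 / ncfZ a + 1 / ncfZ b = 1

/-- The standard negative definite bilinear form on `ℤ^N`. -/
def negForm {N : ℕ} (x y : Fin N → ℤ) : ℤ := -∑ i, x i * y i

lemma ncfZ_singleton (c : ℤ) : ncfZ [c] = (c:ℚ) := rfl

lemma ncfZ_cons_cons (c d : ℤ) (t : List ℤ) : ncfZ (c::d::t) = c - 1/ncfZ (d::t) := rfl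

lemma ncfZ_cons (c : ℤ) (t : List ℤ) (ht : t ≠ []) : ncfZ (c::t) = c - 1/ncfZ t := by
  cases t with
  | nil => simp at ht
  | cons d u => rfl

lemma one_lt_ncfZ (l : List ℤ) (h1 : l ≠ []) (h2 : ∀ x ∈ l, 2 ≤ x) : 1 < ncfZ l := by
  induction l with
  | nil => simp at h1
  | cons c t ih =>
    have hc : (2:ℚ) ≤ (c:ℚ) := by exact_mod_cast h2 c (List.mem_cons_self)
    cases t with
    | nil => rw [ncfZ_singleton]; linarith
    | cons d u =>
      have ht1 : 1 < ncfZ (d::u) := ih (by simp) (fun x hx => h2 x (List.mem_cons_of_mem _ hx))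
      rw [ncfZ_cons_cons]
      have h3 : 1/ncfZ (d::u) < 1 := by rw [div_lt_one (by linarith)]; linarith
      have h4 : 0 < 1/ncfZ (d::u) := by positivity
      linarith

lemma ncfZ_head_shift (c k : ℤ) (t : List ℤ) : ncfZ ((c+k)::t) = ncfZ (c::t) + k := by
  cases t with
  | nil => rw [ncfZ_singleton, ncfZ_singleton]; push_cast; ring
  | cons d u => rw [ncfZ_cons_cons, ncfZ_cons_cons]; push_cast; ring

lemma two_lt_ncfZ (c : ℤ) (t : List ℤ) (hc : 3 ≤ c) (h2 : ∀ x ∈ c::t, 2 ≤ x) :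
    2 < ncfZ (c::t) := by
  have hc' : (3:ℚ) ≤ (c:ℚ) := by exact_mod_cast hc
  cases t with
  | nil => rw [ncfZ_singleton]; linarith
  | cons d u =>
    have ht1 : 1 < ncfZ (d::u) :=
      one_lt_ncfZ _ (by simp) (fun x hx => h2 x (List.mem_cons_of_mem _ hx))
    rw [ncfZ_cons_cons]
    have h3 : 1/ncfZ (d::u) < 1 := by rw [div_lt_one (by linarith)]; linarith
    linarith

lemma ncfZ_head_two_lt (t : List ℤ) (ht : t ≠ []) (h2 : ∀ x ∈ (2:ℤ)::t, 2 ≤ x) :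
    ncfZ (2::t) < 2 := by
  have ht1 : 1 < ncfZ t :=
    one_lt_ncfZ _ ht (fun x hx => h2 x (List.mem_cons_of_mem _ hx))
  rw [ncfZ_cons 2 t ht]
  have h4 : 0 < 1/ncfZ t := by positivity
  push_cast
  linarith

lemma Complementary.symm {a b : List ℤ} (h : Complementary a b) : Complementary b a := by
  obtain ⟨h1,h2,h3,h4,h5⟩ := h
  exact ⟨h2,h1,h4,h3, by linarith⟩

lemma compl_fwd {a1 : ℤ} {t b : List ℤ} (h : Complementary (a1::t) b) :
    Complementary ((a1+1)::t) (2::b) := by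
  obtain ⟨ha, hb, h2a, h2b, heq⟩ := h
  have hx := one_lt_ncfZ (a1::t) ha h2a
  have hy := one_lt_ncfZ b hb h2b
  refine ⟨by simp, by simp, ?_, ?_, ?_⟩
  · intro x hx'
    rcases List.mem_cons.1 hx' with rfl | hx'
    · have := h2a a1 (List.mem_cons_self); omega
    · exact h2a x (List.mem_cons_of_mem _ hx')
  · intro x hx'
    rcases List.mem_cons.1 hx' with rfl | hx'
    · omega
    · exact h2b x hx'
  · rw [ncfZ_head_shift, ncfZ_cons 2 b hb]
    set x := ncfZ (a1::t)
    set y := ncfZ b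
    have hx0 : x ≠ 0 := by linarith
    have hy0 : y ≠ 0 := by linarith
    have h1y : 1/y < 1 := by rw [div_lt_one (by linarith)]; linarith
    have h2y : ((2:ℤ):ℚ) - 1/y ≠ 0 := by push_cast; linarith
    have hx1 : x + 1 ≠ 0 := by linarith
    have h2y' : 2*y - 1 ≠ 0 := by linarith
    push_cast
    rw [div_add_div _ _ hx1 (by linarith : (2:ℚ) - 1/y ≠ 0)]
    field_simp at heq ⊢
    ring_nf
    ring_nf at heq
    have hinv : (-1 + y*2) ≠ 0 := by linarith
    field_simp
    linarith [heq]

lemma compl_red_aux {a1 b1 : ℤ} {t u : List ℤ} (h : Complementary (a1::t) (b1::u))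
    (ha1 : 3 ≤ a1) : b1 = 2 ∧ u ≠ [] ∧ Complementary ((a1-1)::t) u := by
  obtain ⟨ha, hb, h2a, h2b, heq⟩ := h
  have hx := one_lt_ncfZ (a1::t) ha h2a
  have hy := one_lt_ncfZ (b1::u) hb h2b
  have hx2 : 2 < ncfZ (a1::t) := two_lt_ncfZ a1 t ha1 h2a
  set x := ncfZ (a1::t) with hxdef
  set y := ncfZ (b1::u) with hydef
  have hx0 : x ≠ 0 := by linarith
  have hy0 : y ≠ 0 := by linarith
  -- y < 2
  have h1x : 1/x < 1/2 := by
    rw [div_lt_div_iff₀ (by linarith) (by norm_num)]; linarith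
  have h1y : 1/2 < 1/y := by linarith
  have hylt : y < 2 := by
    rw [div_lt_div_iff₀ (by norm_num) (by linarith)] at h1y; linarith
  -- b1 = 2
  have hb1 : b1 = 2 := by
    by_contra hne
    have : 3 ≤ b1 := by have := h2b b1 (List.mem_cons_self); omega
    have := two_lt_ncfZ b1 u this h2b
    rw [← hydef] at this; linarith
  subst hb1
  -- u ≠ []
  have hu : u ≠ [] := by
    intro rfl'
    subst rfl'
    rw [hydef, ncfZ_singleton] at hylt
    norm_num at hylt
  refine ⟨rfl, hu, ?_, hu, ?_, ?_, ?_⟩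
  · simp
  · intro x hx'
    rcases List.mem_cons.1 hx' with rfl | hx'
    · omega
    · exact h2a _ (List.mem_cons_of_mem _ hx')
  · intro x hx'; exact h2b _ (List.mem_cons_of_mem _ hx')
  · have e1 : ncfZ ((a1-1)::t) = x - 1 := by
      have := ncfZ_head_shift (a1-1) 1 t
      simp at this
      rw [hxdef]
      linarith [this]
    have hu1 : 1 < ncfZ u :=
      one_lt_ncfZ u hu (fun z hz => h2b z (List.mem_cons_of_mem _ hz))
    have e2 : y = 2 - 1/ncfZ u := by
      rw [hydef, ncfZ_cons 2 u hu]; push_cast; ring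
    have hu0 : ncfZ u ≠ 0 := by linarith
    rw [e1]
    have h1u : 1/ncfZ u = 2 - y := by rw [e2]; ring
    rw [h1u]
    have hx1 : x - 1 ≠ 0 := by linarith
    field_simp at heq ⊢
    nlinarith [heq]

lemma compl_red {a b : List ℤ} (h : Complementary a b) :
    (a = [2] ∧ b = [2]) ∨
    (∃ a1 t u, a = a1::t ∧ 3 ≤ a1 ∧ b = 2::u ∧ u ≠ [] ∧ Complementary ((a1-1)::t) u) ∨
    (∃ b1 u t, b = b1::u ∧ 3 ≤ b1 ∧ a = 2::t ∧ t ≠ [] ∧ Complementary t ((b1-1)::u)) := by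
  obtain ⟨ha, hb, h2a, h2b, heq⟩ := h
  obtain ⟨a1, t, rfl⟩ : ∃ a1 t, a = a1::t := by
    cases a with | nil => simp at ha | cons c s => exact ⟨c, s, rfl⟩
  obtain ⟨b1, u, rfl⟩ : ∃ b1 u, b = b1::u := by
    cases b with | nil => simp at hb | cons c s => exact ⟨c, s, rfl⟩
  have H : Complementary (a1::t) (b1::u) := ⟨ha, hb, h2a, h2b, heq⟩
  have ha1 : 2 ≤ a1 := h2a _ (List.mem_cons_self)
  have hb1 : 2 ≤ b1 := h2b _ (List.mem_cons_self)
  rcases (by omega : a1 = 2 ∨ 3 ≤ a1) with rfl | ha3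
  · rcases (by omega : b1 = 2 ∨ 3 ≤ b1) with rfl | hb3
    · -- both heads 2: show t = [] and u = []
      left
      have hx := one_lt_ncfZ _ ha h2a
      have hy := one_lt_ncfZ _ hb h2b
      have ht : t = [] := by
        by_contra hne
        have h1 : ncfZ ((2:ℤ)::t) < 2 := ncfZ_head_two_lt t hne h2a
        have h2 : ncfZ ((2:ℤ)::u) ≤ 2 := by
          cases u with
          | nil => rw [ncfZ_singleton]; norm_num
          | cons d v => linarith [ncfZ_head_two_lt (d::v) (by simp) h2b]
        have e1 : 1/2 < 1/ncfZ ((2:ℤ)::t) := by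
          rw [div_lt_div_iff₀ (by norm_num) (by linarith)]; linarith
        have e2 : 1/2 ≤ 1/ncfZ ((2:ℤ)::u) := by
          rw [div_le_div_iff₀ (by norm_num) (by linarith)]; linarith
        linarith
      subst ht
      have hu : u = [] := by
        by_contra hne
        have h1 : ncfZ ((2:ℤ)::u) < 2 := ncfZ_head_two_lt u hne h2b
        have e1 : 1/2 < 1/ncfZ ((2:ℤ)::u) := by
          rw [div_lt_div_iff₀ (by norm_num) (by linarith)]; linarith
        rw [ncfZ_singleton] at heq
        push_cast at heq
        linarith
      subst hu
      exact ⟨rfl, rfl⟩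
    · right; right
      obtain ⟨h1, h2, h3⟩ := compl_red_aux H.symm hb3
      exact ⟨b1, u, t, rfl, hb3, by rw [h1], h2, h3.symm⟩
  · right; left
    obtain ⟨h1, h2, h3⟩ := compl_red_aux H ha3
    exact ⟨a1, t, u, rfl, ha3, by rw [h1], h2, h3⟩

def incLast : List ℤ → List ℤ
  | [] => []
  | [c] => [c+1]
  | c :: d :: t => c :: incLast (d :: t)

lemma incLast_cons (c : ℤ) (t : List ℤ) (ht : t ≠ []) :
    incLast (c::t) = c :: incLast t := by
  cases t with
  | nil => simp at ht
  | cons d u => rfl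

lemma incLast_append (l : List ℤ) (c : ℤ) : incLast (l ++ [c]) = l ++ [c+1] := by
  induction l with
  | nil => rfl
  | cons d s ih => rw [List.cons_append, incLast_cons _ _ (by simp), ih, List.cons_append]

lemma compl_base : Complementary [3] [2,2] := by
  refine ⟨by simp, by simp, ?_, ?_, ?_⟩
  · intro x hx; simp at hx; omega
  · intro x hx; simp at hx; omega
  · rw [ncfZ_singleton, ncfZ_cons_cons, ncfZ_singleton]
    norm_num

lemma compl_incLast : ∀ n : ℕ, ∀ a b : List ℤ, a.length + b.length ≤ n →
    Complementary a b → Complementary (incLast a) (b ++ [2]) := by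
  intro n
  induction n with
  | zero =>
    intro a b hlen h
    obtain ⟨ha, _, _, _, _⟩ := h
    cases a with
    | nil => simp at ha
    | cons c t => simp at hlen
  | succ n ih =>
    intro a b hlen h
    rcases compl_red h with ⟨rfl, rfl⟩ | ⟨a1, t, u, rfl, ha1, rfl, hu, h'⟩ |
      ⟨b1, u, t, rfl, hb1, rfl, ht, h'⟩
    · exact compl_base
    · have h2 := ih ((a1-1)::t) u (by simp at hlen ⊢; omega) h'
      cases t with
      | nil =>
        have h3 := compl_fwd h2
        show Complementary [a1+1] (2::(u ++ [2]))
        have e2 : a1 - 1 + 1 + 1 = a1 + 1 := by ring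
        rw [e2] at h3
        exact h3
      | cons d v =>
        rw [incLast_cons _ _ (by simp)] at h2
        have h3 := compl_fwd h2
        have e2 : a1 - 1 + 1 = a1 := by ring
        rw [e2] at h3
        show Complementary (incLast (a1::d::v)) ((2::u) ++ [2])
        rw [incLast_cons _ _ (by simp)]
        exact h3
    · have h2 := ih t ((b1-1)::u) (by simp at hlen ⊢; omega) h'
      rw [List.cons_append] at h2
      have h3 := (compl_fwd h2.symm).symm
      have e2 : b1 - 1 + 1 = b1 := by ring
      rw [e2] at h3
      show Complementary (incLast (2::t)) ((b1::u) ++ [2])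
      rw [incLast_cons _ _ ht, List.cons_append]
      exact h3

lemma compl_rev : ∀ n : ℕ, ∀ a b : List ℤ, a.length + b.length ≤ n →
    Complementary a b → Complementary a.reverse b.reverse := by
  intro n
  induction n with
  | zero =>
    intro a b hlen h
    obtain ⟨ha, _, _, _, _⟩ := h
    cases a with
    | nil => simp at ha
    | cons c t => simp at hlen
  | succ n ih =>
    intro a b hlen h
    rcases compl_red h with ⟨rfl, rfl⟩ | ⟨a1, t, u, rfl, ha1, rfl, hu, h'⟩ |
      ⟨b1, u, t, rfl, hb1, rfl, ht, h'⟩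
    · simpa using h
    · have h2 := ih ((a1-1)::t) u (by simp at hlen ⊢; omega) h'
      have h3 := compl_incLast _ _ _ le_rfl h2
      rw [List.reverse_cons, incLast_append] at h3
      have e2 : a1 - 1 + 1 = a1 := by ring
      rw [e2] at h3
      rw [List.reverse_cons, List.reverse_cons]
      exact h3
    · have h2 := ih t ((b1-1)::u) (by simp at hlen ⊢; omega) h'
      have h3 := (compl_incLast _ _ _ le_rfl h2.symm).symm
      rw [List.reverse_cons, incLast_append] at h3
      have e2 : b1 - 1 + 1 = b1 := by ring
      rw [e2] at h3
      rw [List.reverse_cons, List.reverse_cons]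
      exact h3

theorem complementary_reverse (a b : List ℤ) (h : Complementary a b) :
    Complementary a.reverse b.reverse :=
  compl_rev (a.length + b.length) a b le_rfl h
end

section
/- For all integers k ≥ 0 and s ≥ 0, the sequences (3, (k+4)^{[s]}) and (2, (3, (2)^{[k+1]})^{[s]}, 2) are complementary; that is, 1/[3, k+4, …, k+4]^- (with s copies of k+4) + 1/[2, 3, 2, …, 2, 3, 2, …, 2, …, 2]^- (a 2, followed by s blocks each consisting of a 3 followed by k+1 twos, followed by a final 2) = 1. -/
lemma flatMap_cast_eq_map (l : List ℤ) :
    (l.flatMap fun (a : ℤ) => [((a : ℚ))]) = l.map (Int.cast : ℤ → ℚ) := by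
  induction l <;> simp_all

lemma ncf_cons (a : ℚ) (l : List ℚ) : ncf (a :: l) = a - 1 / ncf l := by
  cases l <;> simp [ncf]

lemma ncf_twos (m : ℕ) (l : List ℚ) (h : 1 < ncf l) :
    ncf (List.replicate m 2 ++ l) = ((m + 1) * ncf l - m) / (m * ncf l - m + 1) ∧
    1 < ncf (List.replicate m 2 ++ l) := by
  induction m with
  | zero => simpa using h
  | succ m ih =>
    obtain ⟨e, hgt⟩ := ih
    set x := ncf l with hx
    have hden : 0 < (m : ℚ) * x - m + 1 := by nlinarith
    have hnum : 0 < ((m : ℚ) + 1) * x - m := by nlinarith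
    have hrw : List.replicate (m + 1) (2 : ℚ) ++ l = 2 :: (List.replicate m 2 ++ l) := by
      simp [List.replicate_succ]
    rw [hrw, ncf_cons, e]
    have key : (2 : ℚ) - 1 / ((((m : ℚ) + 1) * x - m) / ((m : ℚ) * x - m + 1))
        = ((↑(m + 1) + 1) * x - ↑(m + 1)) / (↑(m + 1) * x - ↑(m + 1) + 1) := by
      rw [one_div_div]
      push_cast
      have h1 : (((m : ℚ) + 1) * x - m) ≠ 0 := hnum.ne'
      have h2 : ((m : ℚ) + 1) * x - (m + 1) + 1 = ((m : ℚ) + 1) * x - m := by ring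
      rw [h2]
      rw [eq_div_iff h1, sub_mul, div_mul_cancel₀ _ h1]
      ring
    refine ⟨key, ?_⟩
    rw [key]
    push_cast
    have h2 : ((m : ℚ) + 1) * x - (m + 1) + 1 = ((m : ℚ) + 1) * x - m := by ring
    rw [h2, lt_div_iff₀ hnum]
    nlinarith

lemma alg (K u : ℚ) (hK : 0 ≤ K) (hu : 1 < u) :
    3 - 1 / (((K + 1 + 1) * ((2 * u - 1) / (u - 1)) - (K + 1)) /
      ((K + 1) * ((2 * u - 1) / (u - 1)) - (K + 1) + 1))
      = ((2 * K + 7) * u - 2) / ((K + 3) * u - 1) := by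
  have hum : u - 1 ≠ 0 := by intro h; nlinarith [h]
  have hA : (0:ℚ) < (K + 3) * u - 1 := by nlinarith
  have hB : (0:ℚ) < (K + 2) * u - 1 := by nlinarith
  have h1 : (K + 1 + 1) * ((2 * u - 1) / (u - 1)) - (K + 1) = ((K + 3) * u - 1) / (u - 1) := by
    field_simp; ring
  have h2 : (K + 1) * ((2 * u - 1) / (u - 1)) - (K + 1) + 1 = ((K + 2) * u - 1) / (u - 1) := by
    field_simp; ring
  have h3 : ((K + 3) * u - 1) / (u - 1) / (((K + 2) * u - 1) / (u - 1))
      = ((K + 3) * u - 1) / ((K + 2) * u - 1) := by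
    rw [div_div_div_comm, div_self hum, div_one]
  rw [h1, h2, h3]
  rw [eq_div_iff hA.ne']
  field_simp
  ring

lemma alg2 (K u : ℚ) (hK : 0 ≤ K) (hu : 1 < u) :
    ((2 * K + 7) * u - 2) / ((K + 3) * u - 1)
      = (2 * (K + 4 - 1 / u) - 1) / ((K + 4 - 1 / u) - 1) := by
  have hu0 : (0:ℚ) < u := by linarith
  have hA : (0:ℚ) < (K + 3) * u - 1 := by nlinarith
  have hd : (0:ℚ) < K + 4 - 1 / u - 1 := by
    have : 1 / u < 1 := by rw [div_lt_one hu0]; linarith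
    linarith
  rw [div_eq_div_iff hA.ne' hd.ne']
  field_simp
  ring

lemma alg3 (K u : ℚ) (hK : 0 ≤ K) (hu : 1 < u) :
    1 < ((2 * K + 7) * u - 2) / ((K + 3) * u - 1) := by
  have hA : (0:ℚ) < (K + 3) * u - 1 := by nlinarith
  rw [lt_div_iff₀ hA]
  nlinarith

lemma key_invariant (k s : ℕ) :
    1 < ncf (List.replicate (s + 1) ((k : ℚ) + 4)) ∧
    1 < ncf ((List.replicate (s + 1) ((3 : ℚ) :: List.replicate (k + 1) 2)).flatten ++ [2]) ∧
    ncf ((List.replicate (s + 1) ((3 : ℚ) :: List.replicate (k + 1) 2)).flatten ++ [2]) =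
      (2 * ncf (List.replicate (s + 1) ((k : ℚ) + 4)) - 1) /
        (ncf (List.replicate (s + 1) ((k : ℚ) + 4)) - 1) := by
  have hk0 : (0 : ℚ) ≤ (k : ℚ) := by positivity
  induction s with
  | zero =>
    have h2 : (1 : ℚ) < ncf [2] := by norm_num [ncf]
    obtain ⟨e, hgt⟩ := ncf_twos (k + 1) [2] h2
    have hu : ncf (List.replicate 1 ((k : ℚ) + 4)) = (k : ℚ) + 4 := by
      norm_num [ncf]
    have hflat : (List.replicate 1 ((3 : ℚ) :: List.replicate (k + 1) 2)).flatten ++ [2]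
        = 3 :: (List.replicate (k + 1) 2 ++ [2]) := by simp
    have hsimp : ((↑(k + 1) : ℚ) + 1) * 2 - ↑(k + 1) = (k : ℚ) + 3 := by push_cast; ring
    have hsimp2 : ((↑(k + 1) : ℚ)) * 2 - ↑(k + 1) + 1 = (k : ℚ) + 2 := by push_cast; ring
    have hval2 : ncf [(2 : ℚ)] = 2 := by norm_num [ncf]
    rw [hval2] at e
    rw [hsimp, hsimp2] at e
    have hk3 : (0:ℚ) < (k : ℚ) + 3 := by positivity
    have hk2 : (0:ℚ) < (k : ℚ) + 2 := by positivity
    have htv2 : ncf ((List.replicate 1 ((3 : ℚ) :: List.replicate (k + 1) 2)).flatten ++ [2])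
        = (2 * ((k : ℚ) + 4) - 1) / (((k : ℚ) + 4) - 1) := by
      rw [hflat, ncf_cons, e, one_div_div]
      have hne : ((k:ℚ) + 4 - 1) ≠ 0 := by intro h; linarith
      field_simp
      ring
    refine ⟨by rw [hu]; linarith, ?_, by rw [hu, htv2]⟩
    rw [htv2, lt_div_iff₀ (by linarith : (0:ℚ) < (k : ℚ) + 4 - 1)]
    linarith
  | succ s ih =>
    obtain ⟨hu1, ht1, hinv⟩ := ih
    set u := ncf (List.replicate (s + 1) ((k : ℚ) + 4)) with hudef
    set t := ncf ((List.replicate (s + 1) ((3 : ℚ) :: List.replicate (k + 1) 2)).flatten ++ [2])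
      with htdef
    have hu0 : (0 : ℚ) < u := by linarith
    have hu' : ncf (List.replicate (s + 1 + 1) ((k : ℚ) + 4)) = (k : ℚ) + 4 - 1 / u := by
      rw [List.replicate_succ, ncf_cons]
    have hinvu : 1 / u < 1 := by rw [div_lt_one hu0]; linarith
    have hu'gt : 1 < ncf (List.replicate (s + 1 + 1) ((k : ℚ) + 4)) := by
      rw [hu']; linarith
    obtain ⟨e, hgt⟩ := ncf_twos (k + 1)
      ((List.replicate (s + 1) ((3 : ℚ) :: List.replicate (k + 1) 2)).flatten ++ [2]) ht1
    have hflat : (List.replicate (s + 1 + 1) ((3 : ℚ) :: List.replicate (k + 1) 2)).flatten ++ [2]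
        = 3 :: (List.replicate (k + 1) 2 ++
            ((List.replicate (s + 1) ((3 : ℚ) :: List.replicate (k + 1) 2)).flatten ++ [2])) := by
      rw [List.replicate_succ, List.flatten_cons]
      simp
    have htv : ncf ((List.replicate (s + 1 + 1) ((3 : ℚ) :: List.replicate (k + 1) 2)).flatten ++ [2])
        = ((2 * (k : ℚ) + 7) * u - 2) / (((k : ℚ) + 3) * u - 1) := by
      rw [hflat, ncf_cons, e, ← htdef, hinv]
      push_cast
      exact alg (k : ℚ) u hk0 hu1
    refine ⟨hu'gt, ?_, ?_⟩
    · rw [htv]; exact alg3 (k : ℚ) u hk0 hu1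
    · rw [htv, hu']; exact alg2 (k : ℚ) u hk0 hu1

theorem complementary_three_kplusfours (k s : ℕ) :
    Complementary ((3 : ℤ) :: List.replicate s ((k : ℤ) + 4))
      ((2 : ℤ) :: ((List.replicate s ((3 : ℤ) :: List.replicate (k + 1) 2)).flatten ++ [2])) := by
  refine ⟨by simp, by simp, ?_, ?_, ?_⟩
  · intro x hx
    simp [List.mem_replicate] at hx
    rcases hx with h | ⟨_, h⟩ <;> omega
  · intro x hx
    simp [List.mem_flatten, List.mem_replicate] at hx
    rcases hx with h | ⟨_, hxl⟩ | h
    · omega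
    · rcases hxl with h | h <;> omega
    · omega
  · have ha : ncfZ ((3 : ℤ) :: List.replicate s ((k : ℤ) + 4))
        = ncf ((3 : ℚ) :: List.replicate s ((k : ℚ) + 4)) := by
      simp [ncfZ]
      rw [flatMap_cast_eq_map, List.map_replicate]
      norm_cast
    have hb : ncfZ ((2 : ℤ) :: ((List.replicate s ((3 : ℤ) :: List.replicate (k + 1) 2)).flatten ++ [2]))
        = ncf ((2 : ℚ) :: ((List.replicate s ((3 : ℚ) :: List.replicate (k + 1) 2)).flatten ++ [2])) := by
      simp [ncfZ]
      rw [flatMap_cast_eq_map]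
      simp only [List.map_append, List.map_flatten, List.map_replicate, List.map_cons]
      norm_cast
    rw [ha, hb]
    cases s with
    | zero => norm_num [ncf]
    | succ s =>
      obtain ⟨hu1, ht1, hinv⟩ := key_invariant k s
      set u := ncf (List.replicate (s + 1) ((k : ℚ) + 4)) with hudef
      set t := ncf ((List.replicate (s + 1) ((3 : ℚ) :: List.replicate (k + 1) 2)).flatten ++ [2])
        with htdef
      have hu0 : (0 : ℚ) < u := by linarith
      have hum1 : (0 : ℚ) < u - 1 := by linarith
      have h2u1 : (0 : ℚ) < 2 * u - 1 := by linarith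
      have h3u1 : (0 : ℚ) < 3 * u - 1 := by linarith
      rw [ncf_cons, ncf_cons, ← hudef, ← htdef, hinv]
      have ha2 : (3 : ℚ) - 1 / u = (3 * u - 1) / u := by field_simp
      have hb2 : (2 : ℚ) - 1 / ((2 * u - 1) / (u - 1)) = (3 * u - 1) / (2 * u - 1) := by
        rw [one_div_div, eq_div_iff h2u1.ne']
        field_simp
        ring
      rw [ha2, hb2, one_div_div, one_div_div, ← add_div]
      have hs : u + (2 * u - 1) = 3 * u - 1 := by ring
      rw [hs, div_self h3u1.ne']
end
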